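/- The number of segmented permutations of size n with 0 descents and exactly j bars equals (j+1)! · S(n, j+1), where S(n,k) is the Stirling number of the second kind. -/

import Mathlib

open Finset

/-- A segmented permutation of size `n`: a permutation of `Fin n` together with a
set of barred gaps among the `n-1` gaps between consecutive positions. -/
abbrev SegPerm (n : ℕ) := Equiv.Perm (Fin n) × Finset (Fin (n - 1))

/-- The left endpoint of gap `i`, as an element of `Fin n`. -/
def gapL {n : ℕ} (i : Fin (n - 1)) : Fin n := ⟨i.1, by have := i.2; omega⟩

/-- The right endpoint of gap `i`, as an element of `Fin n`. -/
def gapR {n : ℕ} (i : Fin (n - 1)) : Fin n := ⟨i.1 + 1, by have := i.2; omega⟩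

/-- Number of descents of a segmented permutation: gaps that are not barred and
where the value decreases. -/
def desNum {n : ℕ} (π : SegPerm n) : ℕ :=
  (univ.filter (fun i : Fin (n - 1) => i ∉ π.2 ∧ π.1 (gapR i) < π.1 (gapL i))).card

/-- Number of bars of a segmented permutation. -/
def segNum {n : ℕ} (π : SegPerm n) : ℕ := π.2.card

/-- Number of descents of an ordinary permutation. -/
def permDes {n : ℕ} (σ : Equiv.Perm (Fin n)) : ℕ :=
  (univ.filter (fun i : Fin (n - 1) => σ (gapR i) < σ (gapL i))).card

/-- The Eulerian number `A(n,k)`. -/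
def eulerian (n k : ℕ) : ℕ :=
  ((univ : Finset (Equiv.Perm (Fin n))).filter (fun σ => permDes σ = k)).card

/-- `K(n,i,j)`: number of segmented permutations of size `n` with `i` descents
and `j` bars. -/
def Knum (n i j : ℕ) : ℕ :=
  ((univ : Finset (SegPerm n)).filter (fun π => desNum π = i ∧ segNum π = j)).card

/-- `K(n,i,j)` with integer indices; it vanishes for negative indices. -/
def Kint (n : ℕ) (i j : ℤ) : ℤ :=
  (((univ : Finset (SegPerm n)).filter
      (fun π => (desNum π : ℤ) = i ∧ (segNum π : ℤ) = j)).card : ℤ)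

/-- `T(n,k)`: number of segmented permutations of size `n` with `k` descents. -/
def Tnum (n k : ℕ) : ℕ :=
  ((univ : Finset (SegPerm n)).filter (fun π => desNum π = k)).card

/-- `T(n,k)` with an integer index; it vanishes for negative indices. -/
def Tint (n : ℕ) (k : ℤ) : ℤ :=
  (((univ : Finset (SegPerm n)).filter (fun π => (desNum π : ℤ) = k)).card : ℤ)

/-- Stirling numbers of the second kind. -/
def stirling : ℕ → ℕ → ℕ
  | 0, 0 => 1
  | 0, _ + 1 => 0
  | _ + 1, 0 => 0
  | n + 1, k + 1 => (k + 1) * stirling n (k + 1) + stirling n k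


open Function

def surjCard (n k : ℕ) : ℕ := Fintype.card {f : Fin n → Fin k // Surjective f}

lemma surjCard_zero_zero : surjCard 0 0 = 1 := by
  rw [surjCard, Fintype.card_eq_one_iff]
  refine ⟨⟨id, surjective_id⟩, ?_⟩
  rintro ⟨f, hf⟩
  ext x
  exact x.elim0

lemma surjCard_zero_succ (k : ℕ) : surjCard 0 (k + 1) = 0 := by
  rw [surjCard, Fintype.card_eq_zero_iff]
  refine ⟨fun ⟨f, hf⟩ => ?_⟩
  obtain ⟨i, -⟩ := hf 0
  exact i.elim0

lemma surjCard_succ_zero (n : ℕ) : surjCard (n + 1) 0 = 0 := by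
  rw [surjCard, Fintype.card_eq_zero_iff]
  exact ⟨fun ⟨f, hf⟩ => (f 0).elim0⟩

lemma surjective_cons_iff {n k : ℕ} (a : Fin (k + 1)) (g : Fin n → Fin (k + 1)) :
    Surjective (Fin.cons a g : Fin (n + 1) → Fin (k + 1)) ↔
      Surjective g ∨ ((∀ b, b ≠ a → ∃ i, g i = b) ∧ ∀ i, g i ≠ a) := by
  constructor
  · intro h
    by_cases hs : Surjective g
    · exact Or.inl hs
    refine Or.inr ⟨fun b hb => ?_, fun i hi => ?_⟩
    · obtain ⟨j, hj⟩ := h b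
      rcases Fin.eq_zero_or_eq_succ j with rfl | ⟨i, rfl⟩
      · exact absurd (by simpa using hj.symm) hb
      · exact ⟨i, by simpa using hj⟩
    · apply hs
      intro b
      obtain ⟨j, hj⟩ := h b
      rcases Fin.eq_zero_or_eq_succ j with rfl | ⟨i', rfl⟩
      · exact ⟨i, by rw [hi]; simpa using hj⟩
      · exact ⟨i', by simpa using hj⟩
  · rintro (hs | ⟨h1, h2⟩) b
    · obtain ⟨i, hi⟩ := hs b
      exact ⟨i.succ, by simpa using hi⟩
    · by_cases hb : b = a
      · exact ⟨0, by simpa using hb.symm⟩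
      · obtain ⟨i, hi⟩ := h1 b hb
        exact ⟨i.succ, by simpa using hi⟩

/-- functions missing exactly `a` are counted by surjCard onto one fewer element -/
lemma missing_card {n k : ℕ} (a : Fin (k + 1)) :
    Fintype.card {g : Fin n → Fin (k + 1) // (∀ b, b ≠ a → ∃ i, g i = b) ∧ ∀ i, g i ≠ a}
      = surjCard n k := by
  have e1 : {g : Fin n → Fin (k + 1) // (∀ b, b ≠ a → ∃ i, g i = b) ∧ ∀ i, g i ≠ a}
      ≃ {h : Fin n → {x : Fin (k + 1) // x ≠ a} // Surjective h} :=
    { toFun := fun ⟨g, h1, h2⟩ => ⟨fun i => ⟨g i, h2 i⟩, by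
        rintro ⟨b, hb⟩
        obtain ⟨i, hi⟩ := h1 b hb
        exact ⟨i, Subtype.ext hi⟩⟩
      invFun := fun ⟨h, hs⟩ => ⟨fun i => (h i).1,
        fun b hb => by obtain ⟨i, hi⟩ := hs ⟨b, hb⟩; exact ⟨i, congrArg Subtype.val hi⟩,
        fun i => (h i).2⟩
      left_inv := fun ⟨g, h1, h2⟩ => rfl
      right_inv := fun ⟨h, hs⟩ => by ext i : 3 <;> rfl }
  have hcard : Fintype.card {x : Fin (k + 1) // x ≠ a} = k := by
    simp [Fintype.card_subtype_compl]
  let e2 : {x : Fin (k + 1) // x ≠ a} ≃ Fin k := Fintype.equivFinOfCardEq hcard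
  have e3 : {h : Fin n → {x : Fin (k + 1) // x ≠ a} // Surjective h}
      ≃ {h : Fin n → Fin k // Surjective h} :=
    (Equiv.arrowCongr (Equiv.refl (Fin n)) e2).subtypeEquiv (fun h => (Equiv.comp_surjective h e2).symm)
  rw [surjCard]
  exact Fintype.card_congr (e1.trans e3)

lemma surjCard_succ_succ (n k : ℕ) :
    surjCard (n + 1) (k + 1) = (k + 1) * (surjCard n (k + 1) + surjCard n k) := by
  have e1 : {f : Fin (n + 1) → Fin (k + 1) // Surjective f}
      ≃ {p : Fin (k + 1) × (Fin n → Fin (k + 1)) // Surjective (Fin.cons p.1 p.2 : Fin (n+1) → _)} :=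
    ((Fin.consEquiv (fun _ : Fin (n + 1) => Fin (k + 1))).symm).subtypeEquiv (fun f => by
      have : (Fin.cons (f 0) (fun i => f i.succ) : Fin (n+1) → Fin (k+1)) = f :=
        funext fun j => by rcases Fin.eq_zero_or_eq_succ j with rfl | ⟨i, rfl⟩ <;> simp
      constructor
      · intro hf
        show Surjective (Fin.cons (f 0) (fun i => f i.succ) : Fin (n+1) → Fin (k+1))
        rwa [this]
      · intro hf
        have hf' : Surjective (Fin.cons (f 0) (fun i => f i.succ) : Fin (n+1) → Fin (k+1)) := hf
        rwa [this] at hf')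
  have e2 : {p : Fin (k + 1) × (Fin n → Fin (k + 1)) // Surjective (Fin.cons p.1 p.2 : Fin (n+1) → _)}
      ≃ Σ a : Fin (k + 1), {g : Fin n → Fin (k + 1) // Surjective (Fin.cons a g : Fin (n+1) → _)} :=
    Equiv.subtypeProdEquivSigmaSubtype
      (fun (a : Fin (k + 1)) (g : Fin n → Fin (k + 1)) =>
        Surjective (Fin.cons a g : Fin (n+1) → Fin (k+1)))
  rw [surjCard, Fintype.card_congr (e1.trans e2), Fintype.card_sigma]
  have key : ∀ a : Fin (k + 1),
      Fintype.card {g : Fin n → Fin (k + 1) // Surjective (Fin.cons a g : Fin (n+1) → _)}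
        = surjCard n (k + 1) + surjCard n k := by
    intro a
    have e3 : {g : Fin n → Fin (k + 1) // Surjective (Fin.cons a g : Fin (n+1) → _)}
        ≃ {g : Fin n → Fin (k + 1) //
            Surjective g ∨ ((∀ b, b ≠ a → ∃ i, g i = b) ∧ ∀ i, g i ≠ a)} :=
      Equiv.subtypeEquivRight (fun g => surjective_cons_iff a g)
    have hdisj : Disjoint (fun g : Fin n → Fin (k + 1) => Surjective g)
        (fun g => (∀ b, b ≠ a → ∃ i, g i = b) ∧ ∀ i, g i ≠ a) := by
      rw [Pi.disjoint_iff]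
      intro g
      rw [Prop.disjoint_iff]
      rintro ⟨hs, -, h2⟩
      obtain ⟨i, hi⟩ := hs a
      exact h2 i hi
    have e4 := e3.trans (subtypeOrEquiv _ _ hdisj)
    rw [Fintype.card_congr e4, Fintype.card_sum, missing_card]
    rfl
  rw [Finset.sum_congr rfl (fun a _ => key a), Finset.sum_const, card_univ, Fintype.card_fin,
    smul_eq_mul]

lemma surjCard_eq (n k : ℕ) : surjCard n k = Nat.factorial k * stirling n k := by
  induction n generalizing k with
  | zero =>
    cases k with
    | zero => simp [surjCard_zero_zero, stirling]
    | succ k => simp [surjCard_zero_succ, stirling]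
  | succ n ih =>
    cases k with
    | zero => simp [surjCard_succ_zero, stirling]
    | succ k =>
      rw [surjCard_succ_succ, ih, ih, stirling]
      rw [Nat.factorial_succ]
      ring




def blockIdx {n : ℕ} (S : Finset (Fin (n - 1))) (p : Fin n) : ℕ :=
  (univ.filter (fun i : Fin (n - 1) => (i : ℕ) < (p : ℕ) ∧ i ∈ S)).card

lemma card_filter_lt_succ {N : ℕ} (P : Fin N → Prop) [DecidablePred P] (m : ℕ) (hm : m < N) :
    (univ.filter (fun i : Fin N => (i : ℕ) < m + 1 ∧ P i)).card
      = (univ.filter (fun i : Fin N => (i : ℕ) < m ∧ P i)).card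
        + (if P ⟨m, hm⟩ then 1 else 0) := by
  have hsplit : (univ.filter (fun i : Fin N => (i : ℕ) < m + 1 ∧ P i))
      = (univ.filter (fun i : Fin N => (i : ℕ) < m ∧ P i))
        ∪ (univ.filter (fun i : Fin N => i = ⟨m, hm⟩ ∧ P i)) := by
    rw [← filter_or]
    apply filter_congr
    intro i _
    constructor
    · rintro ⟨h1, h2⟩
      rcases Nat.lt_succ_iff_lt_or_eq.1 h1 with h | h
      · exact Or.inl ⟨h, h2⟩
      · exact Or.inr ⟨Fin.ext h, h2⟩
    · rintro (⟨h1, h2⟩ | ⟨rfl, h2⟩)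
      · exact ⟨Nat.lt_succ_of_lt h1, h2⟩
      · exact ⟨Nat.lt_succ_self m, h2⟩
  rw [hsplit, card_union_of_disjoint]
  · congr 1
    by_cases hP : P ⟨m, hm⟩
    · rw [if_pos hP]
      have : (univ.filter (fun i : Fin N => i = ⟨m, hm⟩ ∧ P i)) = {⟨m, hm⟩} := by
        ext i
        simp only [mem_filter, mem_univ, true_and, mem_singleton]
        exact ⟨fun h => h.1, fun h => ⟨h, h ▸ hP⟩⟩
      rw [this, card_singleton]
    · rw [if_neg hP, card_eq_zero, filter_eq_empty_iff]
      rintro i - ⟨rfl, h2⟩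
      exact hP h2
  · rw [disjoint_left]
    rintro i hi1 hi2
    rw [mem_filter] at hi1 hi2
    obtain ⟨-, h1, -⟩ := hi1
    obtain ⟨-, rfl, -⟩ := hi2
    simp at h1
  
lemma blockIdx_zero {n : ℕ} (hn : 0 < n) (S : Finset (Fin (n - 1))) :
    blockIdx S ⟨0, hn⟩ = 0 := by
  rw [blockIdx, card_eq_zero, filter_eq_empty_iff]
  rintro i - ⟨h, -⟩
  simp at h

lemma blockIdx_step {n : ℕ} (S : Finset (Fin (n - 1))) (i : Fin (n - 1)) :
    blockIdx S (gapR i) = blockIdx S (gapL i) + (if i ∈ S then 1 else 0) := by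
  have h := card_filter_lt_succ (fun x : Fin (n - 1) => x ∈ S) i.1 i.2
  simpa [blockIdx, gapL, gapR, Fin.eta] using h

lemma blockIdx_mono {n : ℕ} (S : Finset (Fin (n - 1))) : Monotone (blockIdx S) := by
  intro p q hpq
  apply card_le_card
  intro i hi
  rw [mem_filter] at hi ⊢
  have hle : (p : ℕ) ≤ (q : ℕ) := hpq
  exact ⟨hi.1, lt_of_lt_of_le hi.2.1 hle, hi.2.2⟩

lemma blockIdx_le {n : ℕ} (S : Finset (Fin (n - 1))) (p : Fin n) : blockIdx S p ≤ S.card := by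
  apply card_le_card
  intro i hi
  exact (mem_filter.1 hi).2.2

lemma blockIdx_last {n : ℕ} (hn : 0 < n) (S : Finset (Fin (n - 1))) :
    blockIdx S ⟨n - 1, by omega⟩ = S.card := by
  rw [blockIdx]
  congr 1
  ext i
  simp only [mem_filter, mem_univ, true_and]
  exact ⟨fun h => h.2, fun h => ⟨i.isLt, h⟩⟩

lemma exists_blockIdx_like {n : ℕ} (g : Fin n → ℕ) (hmono : Monotone g)
    (hstep : ∀ i : Fin (n - 1), g (gapR i) ≤ g (gapL i) + 1)
    (hn : 0 < n) (h0 : g ⟨0, hn⟩ = 0) (m : ℕ) (p : Fin n) (hm : m ≤ g p) :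
    ∃ q : Fin n, g q = m := by
  set T := univ.filter (fun q : Fin n => m ≤ g q) with hT
  have hpT : p ∈ T := by rw [hT, mem_filter]; exact ⟨mem_univ _, hm⟩
  have hTne : T.Nonempty := ⟨p, hpT⟩
  set q0 := T.min' hTne with hq0
  have hq0T : q0 ∈ T := T.min'_mem hTne
  have hq0m : m ≤ g q0 := (mem_filter.1 hq0T).2
  rcases Nat.eq_zero_or_pos q0.1 with h | h
  · have hq00 : q0 = ⟨0, hn⟩ := Fin.ext h
    refine ⟨q0, ?_⟩
    rw [hq00, h0]
    rw [hq00, h0] at hq0m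
    omega
  · have hlt : q0.1 - 1 < n - 1 := by have := q0.2; omega
    set i : Fin (n - 1) := ⟨q0.1 - 1, hlt⟩ with hidef
    have hgR : gapR i = q0 := Fin.ext (by simp [gapR, hidef]; omega)
    have hgLlt : (gapL i).1 < q0.1 := by simp [gapL, hidef]; omega
    have hgL : ¬ m ≤ g (gapL i) := by
      intro hle
      have hmem : gapL i ∈ T := mem_filter.2 ⟨mem_univ _, hle⟩
      have := T.min'_le _ hmem
      rw [← hq0] at this
      have : q0.1 ≤ (gapL i).1 := this
      omega
    have hs := hstep i
    rw [hgR] at hs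
    exact ⟨q0, by omega⟩

lemma nodesc_adj {n : ℕ} {σ : Equiv.Perm (Fin n)} {S : Finset (Fin (n - 1))}
    (h0 : desNum (σ, S) = 0) {i : Fin (n - 1)} (hi : i ∉ S) : σ (gapL i) < σ (gapR i) := by
  rw [desNum, card_eq_zero, filter_eq_empty_iff] at h0
  have h1 := h0 (mem_univ i)
  have h2 : ¬ (σ (gapR i) < σ (gapL i)) := fun hlt => h1 ⟨hi, hlt⟩
  have h3 : σ (gapL i) ≠ σ (gapR i) := by
    intro he
    have h4 : gapL i = gapR i := σ.injective he
    have h5 := congrArg Fin.val h4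
    simp [gapL, gapR] at h5
  exact lt_of_le_of_ne (le_of_not_gt h2) h3

lemma nodesc_adj' {n : ℕ} {σ : Equiv.Perm (Fin n)} {S : Finset (Fin (n - 1))}
    (h0 : desNum (σ, S) = 0) (p q : Fin n) (hq : q.1 = p.1 + 1)
    (hb : blockIdx S p = blockIdx S q) : σ p < σ q := by
  have hi : p.1 < n - 1 := by have := q.2; omega
  set i : Fin (n - 1) := ⟨p.1, hi⟩ with hidef
  have hgL : gapL i = p := Fin.ext rfl
  have hgR : gapR i = q := Fin.ext (by simp [gapR, hidef]; omega)
  have hstep := blockIdx_step S i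
  rw [hgL, hgR, hb] at hstep
  have hiS : i ∉ S := by
    intro hS
    rw [if_pos hS] at hstep
    omega
  have := nodesc_adj h0 hiS
  rwa [hgL, hgR] at this

lemma nodesc_chain {n : ℕ} {σ : Equiv.Perm (Fin n)} {S : Finset (Fin (n - 1))}
    (h0 : desNum (σ, S) = 0) :
    ∀ (d : ℕ) (p q : Fin n), q.1 = p.1 + (d + 1) → blockIdx S p = blockIdx S q → σ p < σ q := by
  intro d
  induction d with
  | zero => exact fun p q hq hb => nodesc_adj' h0 p q hq hb
  | succ d ih =>
    intro p q hq hb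
    have hr : p.1 + 1 < n := by have := q.2; omega
    set r : Fin n := ⟨p.1 + 1, hr⟩ with hrdef
    have hpr : p ≤ r := by rw [Fin.le_def]; exact Nat.le_succ _
    have hrq : r ≤ q := by rw [Fin.le_def]; show p.1 + 1 ≤ q.1; omega
    have h1 := blockIdx_mono S hpr
    have h2 := blockIdx_mono S hrq
    have hbr : blockIdx S p = blockIdx S r := by omega
    have hbq : blockIdx S r = blockIdx S q := by omega
    exact lt_trans (nodesc_adj' h0 p r rfl hbr) (ih r q (by show q.1 = p.1 + 1 + (d + 1); omega) hbq)

lemma count_incr {n : ℕ} (g : Fin n → ℕ) (hmono : Monotone g)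
    (hstep : ∀ i : Fin (n - 1), g (gapR i) ≤ g (gapL i) + 1) (hn : 0 < n) :
    ∀ (m : ℕ) (p : Fin n), p.1 = m →
      (univ.filter (fun i : Fin (n - 1) => (i : ℕ) < (p : ℕ) ∧ g (gapL i) < g (gapR i))).card
        + g ⟨0, hn⟩ = g p := by
  intro m
  induction m with
  | zero =>
    intro p hp
    have hp0 : p = ⟨0, hn⟩ := Fin.ext hp
    subst hp0
    have hempty : (univ.filter (fun i : Fin (n - 1) =>
        (i : ℕ) < ((⟨0, hn⟩ : Fin n) : ℕ) ∧ g (gapL i) < g (gapR i))) = ∅ := by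
      rw [filter_eq_empty_iff]
      rintro i - ⟨h, -⟩
      simp at h
    rw [hempty]
    simp
  | succ m ih =>
    intro p hp
    have hm : m < n := by have := p.2; omega
    set r : Fin n := ⟨m, hm⟩ with hrdef
    have hmn : m < n - 1 := by have := p.2; omega
    set i0 : Fin (n - 1) := ⟨m, hmn⟩ with hi0def
    have hgL : gapL i0 = r := Fin.ext rfl
    have hgR : gapR i0 = p := Fin.ext (by simp [gapR, hi0def, hrdef]; omega)
    have hrw : (univ.filter (fun i : Fin (n - 1) => (i : ℕ) < (p : ℕ) ∧ g (gapL i) < g (gapR i)))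
        = univ.filter (fun i : Fin (n - 1) => (i : ℕ) < m + 1 ∧ g (gapL i) < g (gapR i)) := by
      apply filter_congr
      intro i _
      rw [hp]
    have hcs := card_filter_lt_succ (fun i : Fin (n - 1) => g (gapL i) < g (gapR i)) m hmn
    have hrw2 : (univ.filter (fun i : Fin (n - 1) => (i : ℕ) < m ∧ g (gapL i) < g (gapR i)))
        = univ.filter (fun i : Fin (n - 1) => (i : ℕ) < (r : ℕ) ∧ g (gapL i) < g (gapR i)) := rfl
    have ihr := ih r rfl
    have hstep0 := hstep i0
    rw [hgL, hgR] at hstep0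
    have hprle : r ≤ p := by rw [Fin.le_def]; show m ≤ p.1; omega
    have hmono0 : g r ≤ g p := hmono hprle
    have hite : (if g (gapL i0) < g (gapR i0) then 1 else 0) = (if g r < g p then 1 else 0) := by
      rw [hgL, hgR]
    rw [hrw, hcs, hrw2, hite]
    by_cases hinc : g r < g p
    · rw [if_pos hinc]
      omega
    · rw [if_neg hinc]
      omega

-- ## Facts about `g = val ∘ f ∘ sort f` for surjective f

section SortFacts
variable {n j : ℕ} (f : Fin n → Fin (j + 1))

lemma g_mono : Monotone (fun p : Fin n => (f (Tuple.sort f p) : ℕ)) := by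
  intro p q hpq
  exact Tuple.monotone_sort f hpq

lemma g_stab : ∀ p q : Fin n, p < q → f (Tuple.sort f p) = f (Tuple.sort f q) →
    Tuple.sort f p < Tuple.sort f q :=
  ((Tuple.eq_sort_iff (σ := Tuple.sort f) (f := f)).1 rfl).2

variable (hf : Surjective f)
include hf

lemma g_step : ∀ i : Fin (n - 1),
    (f (Tuple.sort f (gapR i)) : ℕ) ≤ (f (Tuple.sort f (gapL i)) : ℕ) + 1 := by
  intro i
  by_cases hj : (f (Tuple.sort f (gapL i)) : ℕ) + 1 > j
  · have := (f (Tuple.sort f (gapR i))).isLt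
    omega
  · set b : Fin (j + 1) := ⟨(f (Tuple.sort f (gapL i)) : ℕ) + 1, by omega⟩ with hbdef
    obtain ⟨v, hv⟩ := hf b
    set p := (Tuple.sort f)⁻¹ v with hpdef
    have hgp : (f (Tuple.sort f p) : ℕ) = (f (Tuple.sort f (gapL i)) : ℕ) + 1 := by
      rw [hpdef]
      simp only [Equiv.Perm.coe_inv, Equiv.apply_symm_apply]
      rw [hv]
    rcases le_or_gt p.1 (gapL i).1 with hle | hlt
    · have hmm : (f (Tuple.sort f p) : ℕ) ≤ (f (Tuple.sort f (gapL i)) : ℕ) :=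
        g_mono f (show p ≤ gapL i from hle)
      omega
    · have hle2 : gapR i ≤ p := by
        rw [Fin.le_def]
        show (gapL i).1 + 1 ≤ p.1
        omega
      have hmm : (f (Tuple.sort f (gapR i)) : ℕ) ≤ (f (Tuple.sort f p) : ℕ) := g_mono f hle2
      omega

lemma g_zero (hn : 0 < n) : (f (Tuple.sort f ⟨0, hn⟩) : ℕ) = 0 := by
  obtain ⟨v, hv⟩ := hf 0
  set p := (Tuple.sort f)⁻¹ v with hpdef
  have hgp : (f (Tuple.sort f p) : ℕ) = 0 := by
    rw [hpdef]
    simp only [Equiv.Perm.coe_inv, Equiv.apply_symm_apply]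
    rw [hv]
    rfl
  have hmm : (f (Tuple.sort f ⟨0, hn⟩) : ℕ) ≤ (f (Tuple.sort f p) : ℕ) :=
    g_mono f (show (⟨0, hn⟩ : Fin n) ≤ p from Nat.zero_le _)
  omega

lemma g_last (hn : 0 < n) : (f (Tuple.sort f ⟨n - 1, by omega⟩) : ℕ) = j := by
  obtain ⟨v, hv⟩ := hf ⟨j, Nat.lt_succ_self j⟩
  set p := (Tuple.sort f)⁻¹ v with hpdef
  have hgp : (f (Tuple.sort f p) : ℕ) = j := by
    rw [hpdef]
    simp only [Equiv.Perm.coe_inv, Equiv.apply_symm_apply]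
    rw [hv]
  have hple : p ≤ (⟨n - 1, by omega⟩ : Fin n) := by
    rw [Fin.le_def]
    show p.1 ≤ n - 1
    have := p.2
    omega
  have h1 : (f (Tuple.sort f p) : ℕ) ≤ (f (Tuple.sort f ⟨n - 1, by omega⟩) : ℕ) :=
    g_mono f hple
  have h2 := (f (Tuple.sort f ⟨n - 1, by omega⟩)).isLt
  omega

/-- the bar set produced from a surjection -/
def barsOf : Finset (Fin (n - 1)) :=
  univ.filter (fun i : Fin (n - 1) => f (Tuple.sort f (gapL i)) < f (Tuple.sort f (gapR i)))

omit hf in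
lemma mem_barsOf_iff (i : Fin (n - 1)) :
    i ∈ barsOf f ↔ (f (Tuple.sort f (gapL i)) : ℕ) < (f (Tuple.sort f (gapR i)) : ℕ) := by
  rw [barsOf, mem_filter]
  exact ⟨fun h => Fin.lt_def.1 h.2, fun h => ⟨mem_univ _, Fin.lt_def.2 h⟩⟩

lemma backward_desNum (hn : 0 < n) : desNum (Tuple.sort f, barsOf f) = 0 := by
  rw [desNum, card_eq_zero, filter_eq_empty_iff]
  rintro i - ⟨hnotS, hdes⟩
  have hdes' : Tuple.sort f (gapR i) < Tuple.sort f (gapL i) := hdes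
  have hmono : f (Tuple.sort f (gapL i)) ≤ f (Tuple.sort f (gapR i)) :=
    Tuple.monotone_sort f (show gapL i ≤ gapR i by
      rw [Fin.le_def]; exact Nat.le_succ _)
  have hnlt : ¬ ((f (Tuple.sort f (gapL i)) : ℕ) < (f (Tuple.sort f (gapR i)) : ℕ)) :=
    fun h => hnotS ((mem_barsOf_iff f i).2 h)
  have heq : f (Tuple.sort f (gapL i)) = f (Tuple.sort f (gapR i)) := by
    apply le_antisymm hmono
    rw [Fin.le_def]
    omega
  have hlt : gapL i < gapR i := by
    rw [Fin.lt_def]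
    exact Nat.lt_succ_self _
  have := g_stab f (gapL i) (gapR i) hlt heq
  exact absurd hdes' (asymm this)

lemma backward_card (hn : 0 < n) : (barsOf f).card = j := by
  have hcnt := count_incr (fun p : Fin n => (f (Tuple.sort f p) : ℕ)) (g_mono f)
    (g_step f hf) hn (n - 1) ⟨n - 1, by omega⟩ rfl
  simp only [] at hcnt
  rw [g_zero f hf hn, g_last f hf hn] at hcnt
  have hrw : barsOf f = univ.filter (fun i : Fin (n - 1) =>
      (i : ℕ) < n - 1 ∧
        (f (Tuple.sort f (gapL i)) : ℕ) < (f (Tuple.sort f (gapR i)) : ℕ)) := by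
    rw [barsOf]
    apply filter_congr
    intro i _
    rw [Fin.lt_def]
    exact ⟨fun h => ⟨i.isLt, h⟩, fun h => h.2⟩
  rw [hrw]
  omega

lemma right_inv_val (hn : 0 < n) (v : Fin n) :
    blockIdx (barsOf f) ((Tuple.sort f)⁻¹ v) = (f v : ℕ) := by
  set p := (Tuple.sort f)⁻¹ v with hpdef
  have hcnt := count_incr (fun q : Fin n => (f (Tuple.sort f q) : ℕ)) (g_mono f)
    (g_step f hf) hn p.1 p rfl
  rw [g_zero f hf hn] at hcnt
  have hrw : blockIdx (barsOf f) p = (univ.filter (fun i : Fin (n - 1) =>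
      (i : ℕ) < (p : ℕ) ∧ (f (Tuple.sort f (gapL i)) : ℕ) < (f (Tuple.sort f (gapR i)) : ℕ))).card := by
    rw [blockIdx]
    congr 1
    apply filter_congr
    intro i _
    rw [mem_barsOf_iff]
  rw [hrw]
  have hfv : (f (Tuple.sort f p) : ℕ) = (f v : ℕ) := by
    rw [hpdef]
    simp only [Equiv.Perm.coe_inv, Equiv.apply_symm_apply]
  omega

end SortFacts

section Forward
variable {n j : ℕ} (σ : Equiv.Perm (Fin n)) (S : Finset (Fin (n - 1)))

lemma forward_surj (hn : 0 < n) (hcard : S.card = j)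
    (hb : ∀ v : Fin n, blockIdx S (σ⁻¹ v) < j + 1) :
    Surjective (fun v : Fin n => (⟨blockIdx S (σ⁻¹ v), hb v⟩ : Fin (j + 1))) := by
  intro b
  have hstep : ∀ i : Fin (n - 1), blockIdx S (gapR i) ≤ blockIdx S (gapL i) + 1 := by
    intro i
    rw [blockIdx_step]
    split <;> omega
  have hlast : blockIdx S ⟨n - 1, by omega⟩ = j := by rw [blockIdx_last hn, hcard]
  have hble : (b : ℕ) ≤ blockIdx S ⟨n - 1, by omega⟩ := by
    rw [hlast]
    exact Nat.lt_succ_iff.1 b.isLt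
  obtain ⟨q, hq⟩ := exists_blockIdx_like (blockIdx S) (blockIdx_mono S) hstep hn
    (blockIdx_zero hn S) b.1 _ hble
  refine ⟨σ q, ?_⟩
  apply Fin.ext
  show blockIdx S (σ⁻¹ (σ q)) = (b : ℕ)
  rw [Equiv.Perm.coe_inv, Equiv.symm_apply_apply]
  exact hq

lemma forward_left_inv (hn : 0 < n) (hdes : desNum (σ, S) = 0)
    (hb : ∀ v : Fin n, blockIdx S (σ⁻¹ v) < j + 1) :
    Tuple.sort (fun v : Fin n => (⟨blockIdx S (σ⁻¹ v), hb v⟩ : Fin (j + 1))) = σ ∧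
      barsOf (fun v : Fin n => (⟨blockIdx S (σ⁻¹ v), hb v⟩ : Fin (j + 1))) = S := by
  set f : Fin n → Fin (j + 1) := fun v => ⟨blockIdx S (σ⁻¹ v), hb v⟩ with hfdef
  have hfσ : ∀ p : Fin n, (f (σ p) : ℕ) = blockIdx S p := by
    intro p
    show blockIdx S (σ⁻¹ (σ p)) = blockIdx S p
    rw [Equiv.Perm.coe_inv, Equiv.symm_apply_apply]
  have hsort : σ = Tuple.sort f := by
    rw [Tuple.eq_sort_iff]
    constructor
    · intro p q hpq
      show f (σ p) ≤ f (σ q)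
      rw [Fin.le_def, hfσ, hfσ]
      exact blockIdx_mono S hpq
    · intro p q hpq heq
      have hbeq : blockIdx S p = blockIdx S q := by
        rw [← hfσ, ← hfσ]
        exact congrArg Fin.val heq
      exact nodesc_chain hdes (q.1 - p.1 - 1) p q (by have := (Fin.lt_def.1 hpq); omega) hbeq
  constructor
  · exact hsort.symm
  · rw [barsOf, ← hsort]
    ext i
    simp only [mem_filter, mem_univ, true_and]
    rw [Fin.lt_def, hfσ, hfσ, blockIdx_step S i]
    by_cases hiS : i ∈ S
    · rw [if_pos hiS]
      simp [hiS]
    · rw [if_neg hiS]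
      simp [hiS]
end Forward

/-- The generalized Eulerian polynomial `α_n(t,q)`, as a function of real arguments. -/
noncomputable def alphaF (n : ℕ) (t q : ℝ) : ℝ :=
  ∑ π : SegPerm n, t ^ desNum π * q ^ segNum π

/-- segmented permutations of size `n` with no descents and `j`
bars are counted by `(j+1)! S(n, j+1)`. -/
theorem Knum_zero_descents (n j : ℕ) (hn : 1 ≤ n) :
    Knum n 0 j = Nat.factorial (j + 1) * stirling n (j + 1) := by
  have hn0 : 0 < n := hn
  rw [← surjCard_eq, surjCard, Fintype.card_subtype, Knum]
  refine Finset.card_bij'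
    (i := fun π hπ => (fun v : Fin n => (⟨blockIdx π.2 (π.1⁻¹ v), by
        have h1 := blockIdx_le π.2 (π.1⁻¹ v)
        have h2 : π.2.card = j := ((mem_filter.1 hπ).2).2
        omega⟩ : Fin (j + 1))))
    (j := fun f hf => (Tuple.sort f, barsOf f))
    ?_ ?_ ?_ ?_
  · intro π hπ
    rw [mem_filter]
    exact ⟨mem_univ _, forward_surj π.1 π.2 hn0 ((mem_filter.1 hπ).2.2) _⟩
  · intro f hf
    have hfs : Surjective f := (mem_filter.1 hf).2
    rw [mem_filter]
    exact ⟨mem_univ _, backward_desNum f hfs hn0, backward_card f hfs hn0⟩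
  · intro π hπ
    have hmem := (mem_filter.1 hπ).2
    have h := forward_left_inv (j := j) π.1 π.2 hn0 hmem.1
      (fun v => by
        have h1 := blockIdx_le π.2 (π.1⁻¹ v)
        have h2 : π.2.card = j := hmem.2
        omega)
    exact Prod.ext_iff.2 ⟨h.1, h.2⟩
  · intro f hf
    have hfs : Surjective f := (mem_filter.1 hf).2
    funext v
    exact Fin.ext (right_inv_val f hfs hn0 v)
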